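/- Let T be a superfield and R a subsuperring of T. (1) If x ∈ T₀ satisfies a monic polynomial equation x^n + a_{n-1}x^{n-1} + ⋯ + a_0 = 0 with coefficients a_i ∈ R, then x ∈ A_v for every valuation v on T with R ⊆ A_v. (2) Conversely, if x ∈ T₀ with x ∉ 𝔍_T belongs to A_v for every valuation v on T with R ⊆ A_v, then x satisfies a monic polynomial equation with coefficients in R. -/

import Mathlib

universe u

/-- A superring: a `ZMod 2`-graded ring `R = R₀ ⊕ R₁` which is supercommutative
(`R₀` is central and every odd element squares to zero). -/
structure IsSuperring {R : Type*} [Ring R] (𝒜 : ZMod 2 → AddSubgroup R) : Prop where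
  one_mem : (1 : R) ∈ 𝒜 0
  mul_mem : ∀ {i j : ZMod 2} {x y : R}, x ∈ 𝒜 i → y ∈ 𝒜 j → x * y ∈ 𝒜 (i + j)
  decompose : ∀ x : R, ∃ x0 ∈ 𝒜 0, ∃ x1 ∈ 𝒜 1, x = x0 + x1
  unique_decomp : ∀ x0 ∈ 𝒜 0, ∀ x1 ∈ 𝒜 1, x0 + x1 = 0 → x0 = 0 ∧ x1 = 0
  even_central : ∀ x ∈ 𝒜 0, ∀ y : R, x * y = y * x
  odd_sq : ∀ x ∈ 𝒜 1, x * x = 0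

/-- The canonical superideal `𝔍_R = R·R₁` of a superring. -/
def canonicalSuperideal {R : Type*} [Ring R] (𝒜 : ZMod 2 → AddSubgroup R) : Set R :=
  (AddSubgroup.closure {y : R | ∃ r : R, ∃ s ∈ 𝒜 1, y = r * s} : AddSubgroup R)

/-- A set is `ℤ₂`-graded (a "superset"): every element decomposes into an even and
an odd homogeneous component, both belonging to the set. -/
def IsGradedSet {R : Type*} [Ring R] (𝒜 : ZMod 2 → AddSubgroup R) (I : Set R) : Prop :=
  ∀ x ∈ I, ∃ x0 ∈ 𝒜 0, ∃ x1 ∈ 𝒜 1, x0 ∈ I ∧ x1 ∈ I ∧ x = x0 + x1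

/-- A subring of `R` (same identity), as a set. -/
structure IsSubringSet {R : Type*} [Ring R] (A : Set R) : Prop where
  zero_mem : (0 : R) ∈ A
  one_mem : (1 : R) ∈ A
  add_mem : ∀ {x y : R}, x ∈ A → y ∈ A → x + y ∈ A
  neg_mem : ∀ {x : R}, x ∈ A → -x ∈ A
  mul_mem : ∀ {x y : R}, x ∈ A → y ∈ A → x * y ∈ A

/-- A (Manis) valuation on a ring `R`: a surjective map `v : R → Γ ∪ {∞}`
(`∞ = ⊤` is absorbing and greater than every element of the totally ordered
abelian group `Γ`) with `v 0 = ∞`, `v 1 = 0`, `v (x*y) = v x + v y` and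
`v (x+y) ≥ min (v x) (v y)`. -/
structure IsValuation {R : Type*} [Ring R] {Γ : Type*} [AddCommGroup Γ] [LinearOrder Γ] [IsOrderedAddMonoid Γ]
    (v : R → WithTop Γ) : Prop where
  surjective : Function.Surjective v
  map_zero : v 0 = ⊤
  map_one : v 1 = 0
  map_mul : ∀ x y : R, v (x * y) = v x + v y
  min_le_add : ∀ x y : R, min (v x) (v y) ≤ v (x + y)

/-- `A_v = {x : v x ≥ 0}`. -/
def valRing {R : Type*} [Ring R] {Γ : Type*} [AddCommGroup Γ] [LinearOrder Γ] [IsOrderedAddMonoid Γ]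
    (v : R → WithTop Γ) : Set R := {x : R | 0 ≤ v x}

/-- `𝔭_v = {x : v x > 0}`. -/
def valIdeal {R : Type*} [Ring R] {Γ : Type*} [AddCommGroup Γ] [LinearOrder Γ] [IsOrderedAddMonoid Γ]
    (v : R → WithTop Γ) : Set R := {x : R | 0 < v x}

/-- `supp v = v⁻¹(∞)`. -/
def valSupp {R : Type*} [Ring R] {Γ : Type*} [AddCommGroup Γ] [LinearOrder Γ] [IsOrderedAddMonoid Γ]
    (v : R → WithTop Γ) : Set R := {x : R | v x = ⊤}

namespace SuperAux

lemma val_sum_ge {T : Type*} [Ring T] {Γ : Type*} [AddCommGroup Γ] [LinearOrder Γ] [IsOrderedAddMonoid Γ]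
    {v : T → WithTop Γ} (hv : IsValuation v) {c : WithTop Γ} (s : Finset ℕ) (f : ℕ → T)
    (h : ∀ i ∈ s, c ≤ v (f i)) : c ≤ v (∑ i ∈ s, f i) := by
  classical
  induction s using Finset.induction with
  | empty => simp [hv.map_zero]
  | insert _ _ hx ih =>
    rw [Finset.sum_insert hx]
    refine le_trans ?_ (hv.min_le_add _ _)
    exact le_min (h _ (Finset.mem_insert_self _ _)) (ih fun i hi => h i (Finset.mem_insert_of_mem hi))

lemma val_neg {T : Type*} [Ring T] {Γ : Type*} [AddCommGroup Γ] [LinearOrder Γ] [IsOrderedAddMonoid Γ]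
    {v : T → WithTop Γ} (hv : IsValuation v) (y : T) : v (-y) = v y := by
  have h1 : v (-1 : T) + v (-1 : T) = 0 := by
    rw [← hv.map_mul, neg_mul_neg, one_mul, hv.map_one]
  have h2 : v (-1 : T) = 0 := by
    cases hvn : v (-1 : T) with
    | top => rw [hvn] at h1; simp at h1
    | coe g =>
      rw [hvn] at h1
      rw [← WithTop.coe_add] at h1
      have : g + g = 0 := by exact_mod_cast h1
      have : g = 0 := by
        rcases lt_trichotomy g 0 with h|h|h
        · exact absurd this (by have := add_lt_add h h; simp_all)
        · exact h
        · exact absurd this (by have := add_lt_add h h; simp_all)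
      rw [this]; rfl
  calc v (-y) = v ((-1) * y) := by rw [neg_one_mul]
  _ = v (-1 : T) + v y := hv.map_mul _ _
  _ = v y := by rw [h2, zero_add]

lemma val_pow {T : Type*} [Ring T] {Γ : Type*} [AddCommGroup Γ] [LinearOrder Γ] [IsOrderedAddMonoid Γ]
    {v : T → WithTop Γ} (hv : IsValuation v) {x : T} {g : Γ} (hg : v x = (g : WithTop Γ)) :
    ∀ k : ℕ, v (x ^ k) = ((k • g : Γ) : WithTop Γ)
  | 0 => by simpa using hv.map_one
  | (k+1) => by
    rw [pow_succ, hv.map_mul, val_pow hv hg k, hg, ← WithTop.coe_add, succ_nsmul]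

lemma superideal_mul_mem {T : Type*} [Ring T] (𝒯 : ZMod 2 → AddSubgroup T) (t : T) {j : T}
    (hj : j ∈ canonicalSuperideal 𝒯) : t * j ∈ canonicalSuperideal 𝒯 := by
  induction hj using AddSubgroup.closure_induction with
  | mem y hy =>
    obtain ⟨r, s, hs, rfl⟩ := hy
    exact AddSubgroup.subset_closure ⟨t * r, s, hs, (mul_assoc _ _ _).symm⟩
  | zero => simpa [canonicalSuperideal] using AddSubgroup.zero_mem _
  | add a b _ _ ha hb => simpa [mul_add, canonicalSuperideal] using AddSubgroup.add_mem _ ha hb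
  | neg a _ ha => rw [mul_neg]; exact AddSubgroup.neg_mem _ ha

lemma anticomm {T : Type*} [Ring T] {𝒯 : ZMod 2 → AddSubgroup T} (hT : IsSuperring 𝒯)
    {u s : T} (hu : u ∈ 𝒯 1) (hs : s ∈ 𝒯 1) : s * u = -(u * s) := by
  have h := hT.odd_sq (u + s) (AddSubgroup.add_mem _ hu hs)
  have hu2 := hT.odd_sq u hu
  have hs2 := hT.odd_sq s hs
  have : u * u + (u * s + (s * u + s * s)) = 0 := by rw [← h]; noncomm_ring
  rw [hu2, hs2] at this
  have h2 : u * s + s * u = 0 := by simpa using this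
  exact eq_neg_of_add_eq_zero_right h2

lemma even_superideal_nilpotent {T : Type*} [Ring T] {𝒯 : ZMod 2 → AddSubgroup T}
    (hT : IsSuperring 𝒯) {z : T} (hz0 : z ∈ 𝒯 0) (hz : z ∈ canonicalSuperideal 𝒯) :
    IsNilpotent z := by
  classical
  set P : AddSubgroup T := AddSubgroup.closure {y : T | ∃ u ∈ 𝒯 1, ∃ s ∈ 𝒯 1, y = u * s} with hP
  have h11 : (1 + 1 : ZMod 2) = 0 := by decide
  have h01 : (0 + 1 : ZMod 2) = 1 := by decide
  have hPeven : P ≤ 𝒯 0 := by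
    rw [hP, AddSubgroup.closure_le]
    rintro y ⟨u, hu, s, hs, rfl⟩
    exact h11 ▸ hT.mul_mem hu hs
  have hJle : (AddSubgroup.closure {y : T | ∃ r : T, ∃ s ∈ 𝒯 1, y = r * s}) ≤ P ⊔ 𝒯 1 := by
    rw [AddSubgroup.closure_le]
    rintro y ⟨r, s, hs, rfl⟩
    obtain ⟨r0, hr0, r1, hr1, rfl⟩ := hT.decompose r
    rw [add_mul]
    refine AddSubgroup.add_mem _ ?_ ?_
    · exact AddSubgroup.mem_sup_right (h01 ▸ hT.mul_mem hr0 hs)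
    · exact AddSubgroup.mem_sup_left (AddSubgroup.subset_closure ⟨r1, hr1, s, hs, rfl⟩)
  obtain ⟨p, hpP, q, hq1, hpq⟩ := AddSubgroup.mem_sup.mp (hJle hz)
  have hq0 : q = 0 := by
    have := hT.unique_decomp (p - z) (AddSubgroup.sub_mem _ (hPeven hpP) hz0) q hq1
      (by rw [sub_add_eq_add_sub, hpq, sub_self])
    exact this.2
  have hzP : z ∈ P := by rw [← hpq, hq0, add_zero]; exact hpP
  clear hpq hq0 hq1 hpP hz hz0
  induction hzP using AddSubgroup.closure_induction with
  | mem y hy =>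
    obtain ⟨u, hu, s, hs, rfl⟩ := hy
    refine ⟨2, ?_⟩
    have hsu := anticomm hT hu hs
    have hu2 := hT.odd_sq u hu
    calc (u * s) ^ 2 = u * (s * u) * s := by noncomm_ring
    _ = u * (-(u * s)) * s := by rw [hsu]
    _ = -((u * u) * (s * s)) := by noncomm_ring
    _ = 0 := by rw [hu2]; simp
  | zero => exact IsNilpotent.zero
  | add a b haP hbP ha hb =>
    exact Commute.isNilpotent_add (hT.even_central a (hPeven haP) b) ha hb
  | neg a _ ha => exact ha.neg

lemma valSubring_val {K : Type u} [Field K] (B : ValuationSubring K) :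
    ∃ (Γ : Type u) (_ : AddCommGroup Γ) (_ : LinearOrder Γ) (_ : IsOrderedAddMonoid Γ) (v : K → WithTop Γ),
      IsValuation v ∧ ∀ y : K, (0 ≤ v y ↔ y ∈ B) := by
  classical
  set w := B.valuation with hwdef
  let Γ : Type u := (Additive (B.ValueGroup)ˣ)ᵒᵈ
  let v : K → WithTop Γ := fun y =>
    if h : w y = 0 then ⊤ else ((OrderDual.toDual (Additive.ofMul (Units.mk0 (w y) h)) : Γ) : WithTop Γ)
  have hcoe : ∀ {y : K} (h : w y ≠ 0),
      v y = ((OrderDual.toDual (Additive.ofMul (Units.mk0 (w y) h)) : Γ) : WithTop Γ) :=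
    fun h => dif_neg h
  have htop : ∀ {y : K}, w y = 0 → v y = ⊤ := fun h => dif_pos h
  have hmono : ∀ {a b : K}, w a ≤ w b → v b ≤ v a := by
    intro a b hab
    by_cases ha : w a = 0
    · rw [htop ha]; exact le_top
    · have hb : w b ≠ 0 := fun h => ha (le_zero_iff.mp (h ▸ hab))
      rw [hcoe ha, hcoe hb, WithTop.coe_le_coe]
      show OrderDual.toDual _ ≤ OrderDual.toDual _
      rw [OrderDual.toDual_le_toDual, Additive.ofMul_le, ← Units.val_le_val]
      exact hab
  refine ⟨Γ, inferInstance, inferInstance, inferInstance, v, ⟨?_, ?_, ?_, ?_, ?_⟩, ?_⟩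
  · rintro (_ | g)
    · exact ⟨0, htop (map_zero w)⟩
    · set u := Additive.toMul (OrderDual.ofDual g) with hu
      obtain ⟨y, hy⟩ := B.valuation_surjective (u : B.ValueGroup)
      have hy0 : w y ≠ 0 := by rw [hy]; exact u.ne_zero
      refine ⟨y, ?_⟩
      rw [hcoe hy0]
      have h2 : Units.mk0 (w y) hy0 = u := Units.ext (by rw [Units.val_mk0]; exact hy)
      rw [h2, hu]
      rfl
  · exact htop (map_zero w)
  · have h1 : w (1 : K) ≠ 0 := by rw [map_one]; exact one_ne_zero
    rw [hcoe h1]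
    have : Units.mk0 (w 1) h1 = 1 := Units.ext (by simp)
    rw [this]
    rfl
  · intro x y
    by_cases hx : w x = 0
    · have hxy : w (x * y) = 0 := by rw [map_mul, hx, zero_mul]
      rw [htop hx, htop hxy]; exact (WithTop.top_add _).symm
    by_cases hy : w y = 0
    · have hxy : w (x * y) = 0 := by rw [map_mul, hy, mul_zero]
      rw [htop hy, htop hxy]; exact (WithTop.add_top _).symm
    have hxy : w (x * y) ≠ 0 := by rw [map_mul]; exact mul_ne_zero hx hy
    rw [hcoe hx, hcoe hy, hcoe hxy, ← WithTop.coe_add]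
    congr 1
    have : Units.mk0 (w (x * y)) hxy = Units.mk0 (w x) hx * Units.mk0 (w y) hy :=
      Units.ext (by simp [map_mul])
    rw [this]
    rfl
  · intro x y
    have h := w.map_add x y
    rcases le_total (w x) (w y) with hle | hle
    · have : w (x + y) ≤ w y := le_trans h (by simp [hle])
      exact le_trans (min_le_right _ _) (hmono this)
    · have : w (x + y) ≤ w x := le_trans h (by simp [hle])
      exact le_trans (min_le_left _ _) (hmono this)
  · intro y
    by_cases h : w y = 0
    · have : y = 0 := by rwa [Valuation.zero_iff] at h
      rw [htop h]
      exact iff_of_true le_top (this ▸ zero_mem B)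
    · rw [hcoe h]
      have h1 : ((0 : Γ) : WithTop Γ) = (0 : WithTop Γ) := rfl
      rw [← h1, WithTop.coe_le_coe]
      have : ((0 : Γ) ≤ OrderDual.toDual (Additive.ofMul (Units.mk0 (w y) h))) ↔
          (Units.mk0 (w y) h ≤ 1) := by
        show (OrderDual.toDual (0 : Additive (B.ValueGroup)ˣ) ≤ _) ↔ _
        rw [OrderDual.toDual_le_toDual]
        show Additive.ofMul (Units.mk0 (w y) h) ≤ Additive.ofMul 1 ↔ _
        rw [Additive.ofMul_le]
      rw [this, ← Units.val_le_val]
      show w y ≤ 1 ↔ _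
      rw [hwdef, B.valuation_le_one_iff]

open Polynomial in
lemma field_key {K : Type u} [Field K] (A : Subring K) (ξ : K)
    (h : ∀ B : ValuationSubring K, A ≤ B.toSubring → ξ ∈ B) : IsIntegral A ξ := by
  classical
  by_cases hξ0 : ξ = 0
  · exact hξ0 ▸ isIntegral_zero
  set y := ξ⁻¹ with hydef
  have hy0 : y ≠ 0 := inv_ne_zero hξ0
  have hyξ : y * ξ = 1 := inv_mul_cancel₀ hξ0
  set Sa := Algebra.adjoin (↥A) {y} with hSadef
  set S₀ : Subring K := Sa.toSubring with hS0def
  have hAS : A ≤ S₀ := fun a ha => Sa.algebraMap_mem ⟨a, ha⟩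
  have hyS : y ∈ S₀ := Algebra.self_mem_adjoin_singleton (↥A) y
  by_cases hyunit : IsUnit (⟨y, hyS⟩ : S₀)
  · obtain ⟨t, ht⟩ := isUnit_iff_exists_inv.mp hyunit
    have ht' : y * (t : K) = 1 := congrArg Subtype.val ht
    have htξ : (t : K) = ξ := by
      calc (t : K) = (y * t) * ξ := by rw [mul_comm y, mul_assoc, hyξ, mul_one]
      _ = ξ := by rw [ht', one_mul]
    have hξS : ξ ∈ Sa := htξ ▸ t.2
    have hξS2 : ξ ∈ (Polynomial.aeval (R := ↥A) y).range := by
      rw [← Algebra.adjoin_singleton_eq_range_aeval]; exact hξS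
    obtain ⟨p, hp⟩ := hξS2
    have hinv : Invertible y := (isUnit_iff_ne_zero.mpr hy0).invertible
    set P : (↥A)[X] := X * p - 1 with hPdef
    have hp' : Polynomial.aeval y p = ξ := hp
    have hPy : Polynomial.aeval y P = 0 := by
      rw [hPdef]
      simp only [map_sub, map_mul, map_one, Polynomial.aeval_X]
      rw [hp', hyξ, sub_self]
    have hinvy : (⅟y : K) = ξ := by
      rw [invOf_eq_right_inv hyξ]
    have hrev : Polynomial.aeval ξ P.reverse = 0 := by
      rw [← hinvy, Polynomial.aeval_def] at *
      exact (Polynomial.eval₂_reverse_eq_zero_iff _ _ _).mpr hPy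
    have hc0 : P.coeff 0 = -1 := by
      simp [hPdef, Polynomial.mul_coeff_zero]
    have H : IsUnit (P.coeff 0) := by rw [hc0]; exact isUnit_one.neg
    have hPne : P ≠ 0 := fun e => by rw [e] at hc0; simp at hc0
    have hkey : (Polynomial.C (H.unit⁻¹).1).leadingCoeff * P.reverse.leadingCoeff = 1 := by
      have h0 : P.natTrailingDegree = 0 :=
        Polynomial.natTrailingDegree_eq_zero.mpr (Or.inr (by rw [hc0]; exact neg_ne_zero.mpr one_ne_zero))
      rw [Polynomial.leadingCoeff_C, Polynomial.reverse_leadingCoeff, Polynomial.trailingCoeff, h0]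
      have h5 : ∀ (u : (↥A)ˣ), (u : ↥A) = P.coeff 0 → (↑u⁻¹ * P.coeff 0 : ↥A) = 1 :=
        fun u hu => by rw [← hu]; exact u.inv_mul
      exact h5 H.unit H.unit_spec
    refine ⟨Polynomial.C (H.unit⁻¹).1 * P.reverse, ?_, ?_⟩
    · rw [Polynomial.Monic.def, Polynomial.leadingCoeff_mul']
      · exact hkey
      · rw [hkey]; exact one_ne_zero
    · rw [← Polynomial.aeval_def, map_mul, hrev, mul_zero]
  · have hspan : Ideal.span {(⟨y, hyS⟩ : S₀)} ≠ ⊤ := by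
      rw [Ne, Ideal.span_singleton_eq_top]; exact hyunit
    obtain ⟨M, hM, hle⟩ := Ideal.exists_le_maximal _ hspan
    have hyM : (⟨y, hyS⟩ : S₀) ∈ M := hle (Ideal.subset_span rfl)
    haveI := hM.isPrime
    obtain ⟨B, hB1, hB2⟩ := (LocalSubring.ofPrime S₀ M).exists_le_valuationSubring
    have hS0L : S₀ ≤ (LocalSubring.ofPrime S₀ M).toSubring := LocalSubring.le_ofPrime S₀ M
    have hAB : A ≤ B.toSubring := le_trans hAS (le_trans hS0L hB1)
    have hξB : ξ ∈ B := h B hAB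
    have hyL : y ∈ (LocalSubring.ofPrime S₀ M).toSubring := hS0L hyS
    have h1 : IsUnit (Subring.inclusion hB1 ⟨y, hyL⟩) := by
      rw [isUnit_iff_exists_inv]
      exact ⟨⟨ξ, hξB⟩, Subtype.ext hyξ⟩
    have h2 : IsUnit (⟨y, hyL⟩ : (LocalSubring.ofPrime S₀ M).toSubring) := hB2.1 _ h1
    have h3 : IsUnit (algebraMap S₀ (LocalSubring.ofPrime S₀ M).toSubring ⟨y, hyS⟩) := by
      convert h2 using 2
      rfl
    have h4 := (IsLocalization.AtPrime.isUnit_to_map_iff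
      (LocalSubring.ofPrime S₀ M).toSubring M (⟨y, hyS⟩ : S₀)).mp h3
    exact (h4 hyM).elim

end SuperAux

set_option maxHeartbeats 2000000 in
set_option synthInstance.maxHeartbeats 1000000 in
/-- Let `T` be a superfield and `R` a subsuperring of `T`. (1) Every even `x ∈ T₀`
integral over `R` lies in every valuation superring of `T` containing `R`.
(2) Conversely, every even `x ∉ 𝔍_T` lying in every valuation superring of `T`
containing `R` is integral over `R`. -/
theorem valuationRings_and_integral_closure {T : Type u} [Ring T] [Nontrivial T]
    (𝒯 : ZMod 2 → AddSubgroup T) (hT : IsSuperring 𝒯)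
    (hfield : (1 : T) ∉ canonicalSuperideal 𝒯 ∧
      ∀ x : T, x ∉ canonicalSuperideal 𝒯 → IsUnit x)
    (R : Set T) (hR : IsSubringSet R) (hRg : IsGradedSet 𝒯 R) :
    (∀ x ∈ 𝒯 0, ∀ n : ℕ, 0 < n → ∀ a : ℕ → T, (∀ i < n, a i ∈ R) →
        x ^ n + ∑ i ∈ Finset.range n, a i * x ^ i = 0 →
        ∀ (Γ : Type u) [AddCommGroup Γ] [LinearOrder Γ] [IsOrderedAddMonoid Γ] (v : T → WithTop Γ),
          IsValuation v → R ⊆ valRing v → x ∈ valRing v) ∧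
      ∀ x ∈ 𝒯 0, x ∉ canonicalSuperideal 𝒯 →
        (∀ (Γ : Type u) [AddCommGroup Γ] [LinearOrder Γ] [IsOrderedAddMonoid Γ] (v : T → WithTop Γ),
          IsValuation v → R ⊆ valRing v → x ∈ valRing v) →
        ∃ n : ℕ, 0 < n ∧ ∃ a : ℕ → T, (∀ i < n, a i ∈ R) ∧
          x ^ n + ∑ i ∈ Finset.range n, a i * x ^ i = 0 := by
  classical
  obtain ⟨hfield1, hfield2⟩ := hfield
  constructor
  · -- Part (1)
    intro x _ n hn a ha heq Γ _ _ _ v hv hRv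
    show 0 ≤ v x
    by_contra hxneg
    push_neg at hxneg
    obtain ⟨g, hg⟩ : ∃ g : Γ, v x = (g : WithTop Γ) := by
      cases hvx : v x with
      | top => rw [hvx] at hxneg; exact absurd hxneg (by simp)
      | coe g => exact ⟨g, rfl⟩
    have hg0 : g < 0 := by
      rw [hg] at hxneg
      exact_mod_cast hxneg
    have heq' : x ^ n = -∑ i ∈ Finset.range n, a i * x ^ i := eq_neg_of_add_eq_zero_left heq
    have hterm : ∀ i ∈ Finset.range n, ((((n-1) • g : Γ)) : WithTop Γ) ≤ v (a i * x ^ i) := by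
      intro i hi
      rw [hv.map_mul]
      have h1 : ((n-1) • g : Γ) ≤ i • g := by
        have h2 : i • g + ((n-1) - i) • g = (n-1) • g := by
          rw [← add_nsmul]
          congr 1
          have := Finset.mem_range.mp hi
          omega
        rw [← h2]
        have h3 : (((n-1) - i) • g : Γ) ≤ 0 := nsmul_nonpos hg0.le _
        calc (i • g + ((n-1) - i) • g : Γ) ≤ i • g + 0 := add_le_add_right h3 _
        _ = i • g := add_zero _
      calc ((((n-1) • g : Γ)) : WithTop Γ) ≤ ((i • g : Γ) : WithTop Γ) := by exact_mod_cast h1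
      _ = 0 + ((i • g : Γ) : WithTop Γ) := (zero_add _).symm
      _ ≤ v (a i) + v (x ^ i) :=
        add_le_add (hRv (ha i (Finset.mem_range.mp hi))) (le_of_eq (SuperAux.val_pow hv hg i).symm)
    have hfin : ((((n-1) • g : Γ)) : WithTop Γ) ≤ ((n • g : Γ) : WithTop Γ) := by
      rw [← SuperAux.val_pow hv hg n, heq', SuperAux.val_neg hv]
      exact SuperAux.val_sum_ge hv _ _ hterm
    have h3 : ((n-1) • g : Γ) ≤ n • g := by exact_mod_cast hfin
    have h4 : (n • g : Γ) = (n-1) • g + g := by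
      rw [← succ_nsmul]; congr 1; omega
    rw [h4] at h3
    have h5 : (0 : Γ) ≤ g := le_of_add_le_add_left (by rwa [add_zero])
    exact absurd h5 (not_le.mpr hg0)
  · -- Part (2)
    intro x hx0 hxJ hxval
    have h00 : (0 + 0 : ZMod 2) = 0 := by decide
    have h11 : (1 + 1 : ZMod 2) = 0 := by decide
    have h01 : (0 + 1 : ZMod 2) = 1 := by decide
    have h10 : (1 + 0 : ZMod 2) = 1 := by decide
    -- the even subring S
    let S : Subring T :=
      { carrier := (𝒯 0 : Set T)
        mul_mem' := fun {a b} ha hb => h00 ▸ hT.mul_mem ha hb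
        one_mem' := hT.one_mem
        add_mem' := fun {a b} ha hb => AddSubgroup.add_mem _ ha hb
        zero_mem' := AddSubgroup.zero_mem _
        neg_mem' := fun {a} ha => AddSubgroup.neg_mem _ ha }
    letI instCommS : CommRing ↥S :=
      { (inferInstance : Ring ↥S) with
        mul_comm := fun a b => Subtype.ext (hT.even_central ↑a a.2 ↑b) }
    -- the even part of the canonical superideal, as an ideal of S
    let I : Ideal ↥S :=
      { carrier := {s : ↥S | (s : T) ∈ canonicalSuperideal 𝒯}
        add_mem' := fun {a b} ha hb =>
          show ((a + b : ↥S) : T) ∈ canonicalSuperideal 𝒯 from AddSubgroup.add_mem _ ha hb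
        zero_mem' := show ((0 : ↥S) : T) ∈ canonicalSuperideal 𝒯 from AddSubgroup.zero_mem _
        smul_mem' := fun c s hs =>
          show ((c • s : ↥S) : T) ∈ canonicalSuperideal 𝒯 from
            SuperAux.superideal_mul_mem 𝒯 (c : T) hs }
    -- uniqueness of decompositions
    have uniq : ∀ {z0 z1 z0' z1' : T}, z0 ∈ 𝒯 0 → z1 ∈ 𝒯 1 → z0' ∈ 𝒯 0 → z1' ∈ 𝒯 1 →
        z0 + z1 = z0' + z1' → z0 = z0' := by
      intro z0 z1 z0' z1' ha hb ha' hb' heq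
      have h2 : (z0 - z0') + (z1 - z1') = 0 := by
        rw [sub_add_sub_comm, heq, sub_self]
      have h3 := hT.unique_decomp _ (AddSubgroup.sub_mem _ ha ha') _
        (AddSubgroup.sub_mem _ hb hb') h2
      exact sub_eq_zero.mp h3.1
    choose ev hev0 w1 hw1 hevw using hT.decompose
    have hev_eq : ∀ (t z0 z1 : T), z0 ∈ 𝒯 0 → z1 ∈ 𝒯 1 → t = z0 + z1 → ev t = z0 :=
      fun t z0 z1 ha hb ht => uniq (hev0 t) (hw1 t) ha hb (by rw [← hevw t, ← ht])
    -- the quotient field K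
    have hKfield : IsField (↥S ⧸ I) := by
      refine ⟨⟨Ideal.Quotient.mk I 1, 0, ?_⟩, mul_comm, ?_⟩
      · intro he
        exact hfield1 (Ideal.Quotient.eq_zero_iff_mem.mp he)
      · intro α hα
        obtain ⟨s, rfl⟩ := Ideal.Quotient.mk_surjective α
        have hsI : s ∉ I := fun hs => hα (Ideal.Quotient.eq_zero_iff_mem.mpr hs)
        obtain ⟨u, hu⟩ := hfield2 (s : T) hsI
        obtain ⟨y0, hy0, y1, hy1, hyd⟩ := hT.decompose (↑u⁻¹ : T)
        have h1 : (s : T) * y0 + (s : T) * y1 = 1 := by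
          have h1' : (s : T) * (↑u⁻¹ : T) = 1 := by rw [← hu]; exact u.mul_inv
          rw [hyd, mul_add] at h1'
          exact h1'
        have hsy : (s : T) * y0 = 1 :=
          uniq (h00 ▸ hT.mul_mem s.2 hy0) (h01 ▸ hT.mul_mem s.2 hy1) hT.one_mem
            (AddSubgroup.zero_mem _) (by rw [h1, add_zero])
        refine ⟨Ideal.Quotient.mk I ⟨y0, hy0⟩, ?_⟩
        rw [← map_mul, show ((s * ⟨y0, hy0⟩ : ↥S)) = 1 from Subtype.ext hsy, map_one]
    letI instKfield : Field (↥S ⧸ I) := hKfield.toField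
    -- the image of R
    let R' : Subring ↥S :=
      { carrier := {s : ↥S | (s : T) ∈ R}
        mul_mem' := fun {a b} ha hb => hR.mul_mem ha hb
        one_mem' := hR.one_mem
        add_mem' := fun {a b} ha hb => hR.add_mem ha hb
        zero_mem' := hR.zero_mem
        neg_mem' := fun {a} ha => hR.neg_mem ha }
    let Rbar : Subring (↥S ⧸ I) := R'.map (Ideal.Quotient.mk I)
    let xh : ↥S := ⟨x, hx0⟩
    let ξ : ↥S ⧸ I := Ideal.Quotient.mk I xh
    -- ξ belongs to every valuation subring of K containing Rbar
    have hmem : ∀ B : ValuationSubring (↥S ⧸ I), Rbar ≤ B.toSubring → ξ ∈ B := by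
      intro B hRB
      obtain ⟨Γ, instΓ, instΓ2, instΓ3, vK, hvK, hvmem⟩ := SuperAux.valSubring_val B
      let v : T → WithTop Γ := fun t => vK (Ideal.Quotient.mk I ⟨ev t, hev0 t⟩)
      have hvx : v x = vK ξ := by
        have hevx : ev x = x := hev_eq x x 0 hx0 (AddSubgroup.zero_mem _) (add_zero x).symm
        show vK (Ideal.Quotient.mk I ⟨ev x, hev0 x⟩) = vK (Ideal.Quotient.mk I xh)
        rw [show (⟨ev x, hev0 x⟩ : ↥S) = xh from Subtype.ext hevx]
      have hISv : IsValuation v := by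
        constructor
        · intro γ
          obtain ⟨κ, hκ⟩ := hvK.surjective γ
          obtain ⟨s, rfl⟩ := Ideal.Quotient.mk_surjective κ
          refine ⟨(s : T), ?_⟩
          have hs : ev (s : T) = (s : T) :=
            hev_eq _ _ 0 s.2 (AddSubgroup.zero_mem _) (add_zero _).symm
          show vK (Ideal.Quotient.mk I ⟨ev (s : T), hev0 _⟩) = γ
          rw [show (⟨ev (s : T), hev0 _⟩ : ↥S) = s from Subtype.ext hs]
          exact hκ
        · show vK (Ideal.Quotient.mk I ⟨ev 0, hev0 0⟩) = ⊤
          rw [show (⟨ev 0, hev0 0⟩ : ↥S) = 0 from Subtype.ext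
            (hev_eq 0 0 0 (AddSubgroup.zero_mem _) (AddSubgroup.zero_mem _) (by simp)),
            map_zero]
          exact hvK.map_zero
        · show vK (Ideal.Quotient.mk I ⟨ev 1, hev0 1⟩) = 0
          rw [show (⟨ev 1, hev0 1⟩ : ↥S) = 1 from Subtype.ext
            (hev_eq 1 1 0 hT.one_mem (AddSubgroup.zero_mem _) (add_zero _).symm),
            map_one]
          exact hvK.map_one
        · intro s t
          have hkey : ev (s * t) = ev s * ev t + w1 s * w1 t := by
            refine hev_eq _ _ (ev s * w1 t + w1 s * ev t) ?_ ?_ ?_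
            · exact AddSubgroup.add_mem _ (h00 ▸ hT.mul_mem (hev0 s) (hev0 t))
                (h11 ▸ hT.mul_mem (hw1 s) (hw1 t))
            · exact AddSubgroup.add_mem _ (h01 ▸ hT.mul_mem (hev0 s) (hw1 t))
                (h10 ▸ hT.mul_mem (hw1 s) (hev0 t))
            · calc s * t = (ev s + w1 s) * (ev t + w1 t) := by rw [← hevw s, ← hevw t]
              _ = _ := by noncomm_ring
          have hwst : w1 s * w1 t ∈ 𝒯 0 := h11 ▸ hT.mul_mem (hw1 s) (hw1 t)
          show vK (Ideal.Quotient.mk I ⟨ev (s * t), hev0 _⟩) =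
            vK (Ideal.Quotient.mk I ⟨ev s, hev0 s⟩) + vK (Ideal.Quotient.mk I ⟨ev t, hev0 t⟩)
          have h6 : (⟨ev (s * t), hev0 _⟩ : ↥S) =
              ⟨ev s, hev0 s⟩ * ⟨ev t, hev0 t⟩ + ⟨w1 s * w1 t, hwst⟩ := Subtype.ext hkey
          rw [h6, map_add, map_mul]
          have h7 : Ideal.Quotient.mk I ⟨w1 s * w1 t, hwst⟩ = 0 :=
            Ideal.Quotient.eq_zero_iff_mem.mpr
              (AddSubgroup.subset_closure ⟨w1 s, w1 t, hw1 t, rfl⟩)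
          rw [h7, add_zero]
          exact hvK.map_mul _ _
        · intro s t
          have hkey : ev (s + t) = ev s + ev t := by
            refine hev_eq _ _ (w1 s + w1 t) (AddSubgroup.add_mem _ (hev0 s) (hev0 t))
              (AddSubgroup.add_mem _ (hw1 s) (hw1 t)) ?_
            conv_lhs => rw [hevw s, hevw t]
            abel
          show min (vK (Ideal.Quotient.mk I ⟨ev s, hev0 s⟩))
              (vK (Ideal.Quotient.mk I ⟨ev t, hev0 t⟩)) ≤
              vK (Ideal.Quotient.mk I ⟨ev (s + t), hev0 _⟩)
          rw [show (⟨ev (s + t), hev0 _⟩ : ↥S) = ⟨ev s, hev0 s⟩ + ⟨ev t, hev0 t⟩ from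
            Subtype.ext hkey, map_add]
          exact hvK.min_le_add _ _
      have hRv : R ⊆ valRing v := by
        intro r hr
        obtain ⟨r0, hr0, r1, hr1, hr0R, _, hrd⟩ := hRg r hr
        have hevr : ev r = r0 := hev_eq r r0 r1 hr0 hr1 hrd
        show 0 ≤ vK (Ideal.Quotient.mk I ⟨ev r, hev0 r⟩)
        rw [show (⟨ev r, hev0 r⟩ : ↥S) = ⟨r0, hr0⟩ from Subtype.ext hevr]
        exact (hvmem _).mpr (hRB (Subring.mem_map.mpr ⟨⟨r0, hr0⟩, hr0R, rfl⟩))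
      have h9 : 0 ≤ v x := hxval Γ v hISv hRv
      rw [hvx] at h9
      exact (hvmem ξ).mp h9
    have hint : IsIntegral (↥Rbar) ξ := SuperAux.field_key Rbar ξ hmem
    obtain ⟨p, hpmonic, hpeval⟩ := hint
    -- lift p to a monic polynomial over R'
    have hmaps : ∀ a : ↥R', (Ideal.Quotient.mk I).comp R'.subtype a ∈ Rbar :=
      fun a => Subring.mem_map.mpr ⟨↑a, a.2, rfl⟩
    let ψ : ↥R' →+* ↥Rbar := ((Ideal.Quotient.mk I).comp R'.subtype).codRestrict _ hmaps
    have hψsurj : Function.Surjective ψ := by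
      rintro ⟨b, hb⟩
      obtain ⟨a, haR', ha⟩ := Subring.mem_map.mp hb
      exact ⟨⟨a, haR'⟩, Subtype.ext ha⟩
    haveI : Nontrivial ↥Rbar :=
      nontrivial_of_ne 0 1 (fun h => zero_ne_one (congrArg Subtype.val h))
    have hlift : p ∈ Polynomial.lifts ψ :=
      (Polynomial.lifts_iff_coeff_lifts p).mpr (fun n => hψsurj (p.coeff n))
    obtain ⟨q, hqmap, _, hqmonic⟩ := Polynomial.lifts_and_degree_eq_and_monic hlift hpmonic
    let f : Polynomial ↥S := q.map R'.subtype
    let z : ↥S := f.eval xh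
    have hcomm : (Ideal.Quotient.mk I).comp R'.subtype = (Rbar.subtype).comp ψ := by
      ext a; rfl
    have hz0 : Ideal.Quotient.mk I z = 0 := by
      show Ideal.Quotient.mk I ((q.map R'.subtype).eval xh) = 0
      rw [Polynomial.eval_map, Polynomial.hom_eval₂, hcomm, ← Polynomial.eval₂_map, hqmap]
      exact hpeval
    have hzI : z ∈ I := Ideal.Quotient.eq_zero_iff_mem.mp hz0
    have hznilT : IsNilpotent (z : T) := SuperAux.even_superideal_nilpotent hT z.2 hzI
    obtain ⟨N, hN⟩ := hznilT
    have hzN : z ^ N = 0 := by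
      apply Subtype.ext
      show ((z ^ N : ↥S) : T) = ((0 : ↥S) : T)
      rw [SubmonoidClass.coe_pow, hN]
      rfl
    have hN0 : N ≠ 0 := by
      rintro rfl
      rw [pow_zero] at hzN
      exact one_ne_zero (congrArg Subtype.val hzN)
    have hq1 : q.natDegree ≠ 0 := by
      intro hdeg
      have hq : q = 1 := (Polynomial.Monic.natDegree_eq_zero hqmonic).mp hdeg
      rw [hq, Polynomial.map_one] at hqmap
      rw [← hqmap] at hpeval
      simp at hpeval
    let g : Polynomial ↥S := f ^ N
    have hfmonic : f.Monic := hqmonic.map _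
    have hgmonic : g.Monic := hfmonic.pow _
    have hfdeg : f.natDegree = q.natDegree :=
      Polynomial.natDegree_map_eq_of_injective (fun a b hab => Subtype.ext hab) q
    have hgdeg : g.natDegree = N * q.natDegree := by
      show (f ^ N).natDegree = N * q.natDegree
      rw [hfmonic.natDegree_pow, hfdeg]
    have hgeval : g.eval xh = 0 := by
      show (f ^ N).eval xh = 0
      rw [Polynomial.eval_pow]
      show z ^ N = 0
      exact hzN
    have hgcoeff : ∀ i, ((g.coeff i : ↥S) : T) ∈ R := by
      intro i
      have hg : g = (q ^ N).map R'.subtype := by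
        show f ^ N = _
        rw [Polynomial.map_pow]
      rw [hg, Polynomial.coeff_map]
      exact ((q ^ N).coeff i).2
    have hmpos : 0 < g.natDegree := by
      rw [hgdeg]
      exact Nat.mul_pos (Nat.pos_of_ne_zero hN0) (Nat.pos_of_ne_zero hq1)
    have hSeq : xh ^ g.natDegree + ∑ i ∈ Finset.range g.natDegree, g.coeff i * xh ^ i = 0 := by
      have he := Polynomial.eval_eq_sum_range (p := g) xh
      rw [Finset.sum_range_succ, hgmonic.coeff_natDegree, one_mul, hgeval] at he
      rw [add_comm]
      exact he.symm
    refine ⟨g.natDegree, hmpos, fun i => ((g.coeff i : ↥S) : T), fun i _ => hgcoeff i, ?_⟩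
    have hfinal := congrArg S.subtype hSeq
    simpa [map_add, map_pow, map_mul, map_sum] using hfinal
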